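/- Fix T > 0, let U := [−1,0] ∪ [1,2], and define V : [0,T] × ℝ → ℝ by V(t,x) := −e^{t−T} x if x ≤ 0 and V(t,x) := −e^{T−t} x if x > 0. Then V is a viscosity solution of the HJB equation −v_t(t,x) + sup_{u∈U} { −½ v_{xx}(t,x) x² u² + v_x(t,x) x u² − v_x(t,x) x u − v_x(t,x) x } = 0 on [0,T) × ℝ with v(T,x) = −x. That is: V is continuous, V(T,x) = −x for all x ∈ ℝ, and for every test function ψ : [0,T] × ℝ → ℝ that is continuously differentiable in t and twice continuously differentiable in x: (i) whenever V − ψ attains a global maximum at some (t,x) ∈ [0,T) × ℝ, one has −ψ_t(t,x) + sup_{u∈U}{ −½ ψ_{xx}(t,x) x² u² + ψ_x(t,x) x u² − ψ_x(t,x) x u − ψ_x(t,x) x } ≤ 0; (ii) whenever V − ψ attains a global minimum at some (t,x) ∈ [0,T) × ℝ, one has −ψ_t(t,x) + sup_{u∈U}{ −½ ψ_{xx}(t,x) x² u² + ψ_x(t,x) x u² − ψ_x(t,x) x u − ψ_x(t,x) x } ≥ 0. -/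

import Mathlib

open Set Filter Topology

lemma right_deriv_nonpos {f : ℝ → ℝ} {t b f' : ℝ} (htb : t < b)
    (hd : HasDerivAt f f' t) (h : ∀ s ∈ Set.Ioo t b, f s ≤ f t) : f' ≤ 0 := by
  have hs : Filter.Tendsto (slope f t) (𝓝[>] t) (𝓝 f') :=
    (hasDerivAt_iff_tendsto_slope.mp hd).mono_left
      (nhdsWithin_mono _ fun y hy => ne_of_gt hy)
  refine le_of_tendsto hs ?_
  filter_upwards [Ioo_mem_nhdsGT_of_mem ⟨le_refl t, htb⟩] with s hs2
  have h1 : f s - f t ≤ 0 := sub_nonpos.mpr (h s hs2)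
  have h2 : 0 < s - t := sub_pos.mpr hs2.1
  rw [slope_def_field, div_eq_mul_inv]
  exact mul_nonpos_of_nonpos_of_nonneg h1 (inv_nonneg.mpr h2.le)

lemma right_deriv_nonneg {f : ℝ → ℝ} {t b f' : ℝ} (htb : t < b)
    (hd : HasDerivAt f f' t) (h : ∀ s ∈ Set.Ioo t b, f t ≤ f s) : 0 ≤ f' := by
  have := right_deriv_nonpos (f := fun s => -f s) htb hd.neg (fun s hs => by
    simpa using h s hs)
  linarith

lemma second_deriv_nonpos_of_isLocalMax {f : ℝ → ℝ} {x : ℝ}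
    (hf : Differentiable ℝ f) (hf' : Differentiable ℝ (deriv f))
    (h : IsLocalMax f x) : deriv (deriv f) x ≤ 0 := by
  by_contra hc
  push_neg at hc
  have h0 : deriv f x = 0 := h.deriv_eq_zero
  have hs : Filter.Tendsto (slope (deriv f) x) (𝓝[>] x) (𝓝 (deriv (deriv f) x)) :=
    (hasDerivAt_iff_tendsto_slope.mp (hf' x).hasDerivAt).mono_left
      (nhdsWithin_mono _ fun y hy => ne_of_gt hy)
  have hpos : ∀ᶠ y in 𝓝[>] x, 0 < slope (deriv f) x y :=
    hs.eventually (eventually_gt_nhds hc)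
  have hmax : ∀ᶠ y in 𝓝[>] x, f y ≤ f x := h.filter_mono nhdsWithin_le_nhds
  obtain ⟨u, hu, hsub⟩ := mem_nhdsGT_iff_exists_Ioo_subset.mp (hpos.and hmax)
  set m := (x + u) / 2 with hm
  have hxu : x < u := hu
  have hxm : x < m := by rw [hm]; linarith
  have hmu : m < u := by rw [hm]; linarith
  have hmono : StrictMonoOn f (Set.Icc x m) := by
    apply strictMonoOn_of_deriv_pos (convex_Icc x m) hf.continuous.continuousOn
    intro y hy
    rw [interior_Icc] at hy
    have hyu : y ∈ Set.Ioo x u := ⟨hy.1, hy.2.trans hmu⟩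
    have h1 : 0 < slope (deriv f) x y := (hsub hyu).1
    rw [slope_def_field, h0, sub_zero] at h1
    have h2 : 0 < y - x := sub_pos.mpr hy.1
    have := mul_pos h1 h2
    rwa [div_mul_cancel₀ _ (ne_of_gt h2)] at this
  have hlt : f x < f m := hmono ⟨le_refl x, hxm.le⟩ ⟨hxm.le, le_refl m⟩ hxm
  have hle : f m ≤ f x := (hsub ⟨hxm, hmu⟩).2
  linarith

lemma second_deriv_nonneg_of_isLocalMin {f : ℝ → ℝ} {x : ℝ}
    (hf : Differentiable ℝ f) (hf' : Differentiable ℝ (deriv f))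
    (h : IsLocalMin f x) : 0 ≤ deriv (deriv f) x := by
  have hdn : deriv (fun y => -f y) = fun y => -deriv f y := funext fun y => deriv.fun_neg
  have h1 : deriv (deriv (fun y => -f y)) x ≤ 0 := by
    apply second_deriv_nonpos_of_isLocalMax hf.neg _ h.neg
    show Differentiable ℝ (deriv (fun y => -f y)); rw [hdn]; exact hf'.neg
  rw [hdn] at h1
  have h2 : deriv (fun y => -deriv f y) x = -deriv (deriv f) x := deriv.fun_neg
  rw [h2] at h1
  linarith

lemma key_max {φ : ℝ → ℝ} {c x : ℝ} (hφ : Differentiable ℝ φ)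
    (hφ' : Differentiable ℝ (deriv φ))
    (h : IsLocalMax (fun y => c * y - φ y) x) :
    deriv φ x = c ∧ 0 ≤ deriv (deriv φ) x := by
  have hG : ∀ y, HasDerivAt (fun y => c * y - φ y) (c - deriv φ y) y := fun y => by
    simpa using ((hasDerivAt_id y).const_mul c).fun_sub (hφ y).hasDerivAt
  have h1 : c - deriv φ x = 0 := h.hasDerivAt_eq_zero (hG x)
  have hGd : deriv (fun y => c * y - φ y) = fun y => c - deriv φ y :=
    funext fun y => (hG y).deriv
  have h2 : deriv (deriv (fun y => c * y - φ y)) x ≤ 0 := by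
    apply second_deriv_nonpos_of_isLocalMax (fun y => (hG y).differentiableAt) _ h
    rw [hGd]; exact (differentiable_const c).sub hφ'
  rw [hGd] at h2
  have h3 : deriv (fun y => c - deriv φ y) x = -deriv (deriv φ) x :=
    (((hφ' x).hasDerivAt).const_sub c).deriv
  rw [h3] at h2
  exact ⟨by linarith, by linarith⟩

lemma key_min {φ : ℝ → ℝ} {c x : ℝ} (hφ : Differentiable ℝ φ)
    (hφ' : Differentiable ℝ (deriv φ))
    (h : IsLocalMin (fun y => c * y - φ y) x) :
    deriv φ x = c ∧ deriv (deriv φ) x ≤ 0 := by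
  have hG : ∀ y, HasDerivAt (fun y => c * y - φ y) (c - deriv φ y) y := fun y => by
    simpa using ((hasDerivAt_id y).const_mul c).fun_sub (hφ y).hasDerivAt
  have h1 : c - deriv φ x = 0 := h.hasDerivAt_eq_zero (hG x)
  have hGd : deriv (fun y => c * y - φ y) = fun y => c - deriv φ y :=
    funext fun y => (hG y).deriv
  have h2 : 0 ≤ deriv (deriv (fun y => c * y - φ y)) x := by
    apply second_deriv_nonneg_of_isLocalMin (fun y => (hG y).differentiableAt) _ h
    rw [hGd]; exact (differentiable_const c).sub hφ'
  rw [hGd] at h2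
  have h3 : deriv (fun y => c - deriv φ y) x = -deriv (deriv φ) x :=
    (((hφ' x).hasDerivAt).const_sub c).deriv
  rw [h3] at h2
  exact ⟨by linarith, by linarith⟩

/-- The candidate value function of Example 5.3:
`V(t,x) = −e^{t−T} x` for `x ≤ 0` and `V(t,x) = −e^{T−t} x` for `x > 0`. -/
noncomputable def VEx3 (T : ℝ) : ℝ → ℝ → ℝ :=
  fun t x => if x ≤ 0 then -Real.exp (t - T) * x else -Real.exp (T - t) * x

/-- The control set `U = [−1,0] ∪ [1,2]` of Example 5.3. -/
def UEx3 : Set ℝ := Set.Icc (-1) 0 ∪ Set.Icc 1 2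

/-- The HJB operator of Example 5.3 evaluated on a smooth test function `ψ`:
`−ψ_t(t,x) + sup_{u∈U} { −½ ψ_{xx}(t,x) x² u² + ψ_x(t,x) x u² − ψ_x(t,x) x u − ψ_x(t,x) x }`. -/
noncomputable def HamEx3 (ψ : ℝ → ℝ → ℝ) (t x : ℝ) : ℝ :=
  -(deriv (fun s => ψ s x) t) +
    sSup ((fun u : ℝ =>
        -(1 / 2) * (deriv (deriv (fun y => ψ t y)) x) * x ^ 2 * u ^ 2
        + (deriv (fun y => ψ t y) x) * x * u ^ 2
        - (deriv (fun y => ψ t y) x) * x * u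
        - (deriv (fun y => ψ t y) x) * x) '' UEx3)

lemma UEx3_nonempty : UEx3.Nonempty := ⟨0, Or.inl ⟨by norm_num, le_refl 0⟩⟩

lemma UEx3_compact : IsCompact UEx3 := isCompact_Icc.union isCompact_Icc

lemma UEx3_bounds {u : ℝ} (hu : u ∈ UEx3) : -1 ≤ u ∧ u ≤ 2 := by
  rcases hu with ⟨h1, h2⟩ | ⟨h1, h2⟩ <;> exact ⟨by linarith, by linarith⟩

lemma HamEx3_zero (ψ : ℝ → ℝ → ℝ) (t : ℝ) :
    HamEx3 ψ t 0 = -(deriv (fun s => ψ s 0) t) := by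
  rw [HamEx3]
  have h0 : (fun u : ℝ =>
      -(1 / 2) * (deriv (deriv (fun y => ψ t y)) 0) * (0:ℝ) ^ 2 * u ^ 2
      + (deriv (fun y => ψ t y) 0) * 0 * u ^ 2
      - (deriv (fun y => ψ t y) 0) * 0 * u
      - (deriv (fun y => ψ t y) 0) * 0) = fun _ : ℝ => (0:ℝ) :=
    funext fun u => by ring
  rw [h0, UEx3_nonempty.image_const, csSup_singleton, add_zero]

/-- **Example 5.3.** The function `V` defined piecewise by
`V(t,x) = −e^{t−T} x` for `x ≤ 0` and `−e^{T−t} x` for `x > 0` is a viscosity solution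
of the HJB equation on `[0,T) × ℝ` with terminal value `v(T,x) = −x`: it is continuous,
satisfies the terminal condition, and for every test function `ψ` of class `C^{1,2}`,
(i) at a global maximum of `V − ψ` on `[0,T] × ℝ` occurring at `(t,x) ∈ [0,T) × ℝ` the
HJB operator is `≤ 0`, and (ii) at a global minimum it is `≥ 0`. -/
theorem VEx3_viscosity_solution (T : ℝ) (hT : 0 < T) :
    Continuous (fun w : ℝ × ℝ => VEx3 T w.1 w.2) ∧
    (∀ x : ℝ, VEx3 T T x = -x) ∧
    (∀ ψ : ℝ → ℝ → ℝ,
      (∀ x, Differentiable ℝ (fun t => ψ t x)) →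
      (∀ t, Differentiable ℝ (fun y => ψ t y)) →
      (∀ t, Differentiable ℝ (deriv (fun y => ψ t y))) →
      Continuous (fun w : ℝ × ℝ => deriv (fun s => ψ s w.2) w.1) →
      Continuous (fun w : ℝ × ℝ => deriv (fun y => ψ w.1 y) w.2) →
      Continuous (fun w : ℝ × ℝ => deriv (deriv (fun y => ψ w.1 y)) w.2) →
      ((∀ t x, t ∈ Set.Ico 0 T →
          (∀ t' ∈ Set.Icc (0 : ℝ) T, ∀ x' : ℝ,
            VEx3 T t' x' - ψ t' x' ≤ VEx3 T t x - ψ t x) →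
          HamEx3 ψ t x ≤ 0) ∧
       (∀ t x, t ∈ Set.Ico 0 T →
          (∀ t' ∈ Set.Icc (0 : ℝ) T, ∀ x' : ℝ,
            VEx3 T t x - ψ t x ≤ VEx3 T t' x' - ψ t' x') →
          0 ≤ HamEx3 ψ t x))) := by
  have hVneg : ∀ s y : ℝ, y ≤ 0 → VEx3 T s y = -Real.exp (s - T) * y := by
    intro s y hy; simp [VEx3, hy]
  have hVpos : ∀ s y : ℝ, 0 < y → VEx3 T s y = -Real.exp (T - s) * y := by
    intro s y hy; simp [VEx3, not_le.mpr hy]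
  have hDneg : ∀ (x t : ℝ), x ≤ 0 →
      HasDerivAt (fun s => VEx3 T s x) (-Real.exp (t - T) * x) t := by
    intro x t hx
    have h1 : HasDerivAt (fun s : ℝ => s - T) 1 t := (hasDerivAt_id t).sub_const T
    have h2 : HasDerivAt (fun s : ℝ => Real.exp (s - T)) (Real.exp (t - T)) t := by
      simpa [Function.comp_def] using (Real.hasDerivAt_exp (t - T)).comp t h1
    have h3 : HasDerivAt (fun s : ℝ => -Real.exp (s - T) * x) (-Real.exp (t - T) * x) t := by
      simpa using h2.neg.mul_const x
    have heq : (fun s => VEx3 T s x) = fun s => -Real.exp (s - T) * x :=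
      funext fun s => hVneg s x hx
    rw [heq]; exact h3
  have hDpos : ∀ (x t : ℝ), 0 < x →
      HasDerivAt (fun s => VEx3 T s x) (Real.exp (T - t) * x) t := by
    intro x t hx
    have h1 : HasDerivAt (fun s : ℝ => T - s) (-1) t := (hasDerivAt_id t).const_sub T
    have h2 : HasDerivAt (fun s : ℝ => Real.exp (T - s)) (Real.exp (T - t) * (-1)) t :=
      (Real.hasDerivAt_exp (T - t)).comp t h1
    have h3 : HasDerivAt (fun s : ℝ => -Real.exp (T - s) * x) (Real.exp (T - t) * x) t := by
      have := (h2.neg).mul_const x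
      exact this.congr_deriv (by ring)
    have heq : (fun s => VEx3 T s x) = fun s => -Real.exp (T - s) * x :=
      funext fun s => hVpos s x hx
    rw [heq]; exact h3
  refine ⟨?_, ?_, ?_⟩
  · -- continuity
    have heq : (fun w : ℝ × ℝ => VEx3 T w.1 w.2)
        = fun w : ℝ × ℝ => -Real.exp (w.1 - T) * min w.2 0 - Real.exp (T - w.1) * max w.2 0 := by
      funext w
      rcases le_or_gt w.2 0 with h | h
      · rw [hVneg w.1 w.2 h, min_eq_left h, max_eq_right h]; ring
      · rw [hVpos w.1 w.2 h, min_eq_right h.le, max_eq_left h.le]; ring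
    rw [heq]
    fun_prop
  · intro x
    rcases le_or_gt x 0 with h | h
    · rw [hVneg T x h]; simp
    · rw [hVpos T x h]; simp
  · intro ψ hψt hψx hψxx _ _ _
    constructor
    · -- subsolution
      intro t x ht hmax
      have htmem : t ∈ Set.Icc (0:ℝ) T := ⟨ht.1, ht.2.le⟩
      rcases lt_trichotomy x 0 with hx | hx | hx
      · -- x < 0
        have hft : HasDerivAt (fun s => VEx3 T s x - ψ s x)
            (-Real.exp (t - T) * x - deriv (fun s => ψ s x) t) t :=
          (hDneg x t hx.le).sub (hψt x t).hasDerivAt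
        have ht1 : -Real.exp (t - T) * x - deriv (fun s => ψ s x) t ≤ 0 :=
          right_deriv_nonpos ht.2 hft
            (fun s hs => hmax s ⟨ht.1.trans hs.1.le, hs.2.le⟩ x)
        have hlm : IsLocalMax (fun y => -Real.exp (t - T) * y - ψ t y) x := by
          filter_upwards [Iio_mem_nhds hx] with y hy
          have h1 := hmax t htmem y
          rw [hVneg t y (le_of_lt hy), hVneg t x hx.le] at h1
          simpa using h1
        obtain ⟨hpx, hpxx⟩ := key_max (hψx t) (hψxx t) hlm
        have hA : 0 < deriv (fun y => ψ t y) x * x := by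
          rw [hpx]
          have := Real.exp_pos (t - T)
          nlinarith
        have hB : 0 ≤ deriv (deriv (fun y => ψ t y)) x * x ^ 2 :=
          mul_nonneg hpxx (sq_nonneg x)
        have hsup : sSup ((fun u : ℝ =>
            -(1 / 2) * (deriv (deriv (fun y => ψ t y)) x) * x ^ 2 * u ^ 2
            + (deriv (fun y => ψ t y) x) * x * u ^ 2
            - (deriv (fun y => ψ t y) x) * x * u
            - (deriv (fun y => ψ t y) x) * x) '' UEx3)
            ≤ deriv (fun y => ψ t y) x * x := by
          apply csSup_le (UEx3_nonempty.image _)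
          rintro z ⟨u, hu, rfl⟩
          obtain ⟨hu1, hu2⟩ := UEx3_bounds hu
          nlinarith [mul_nonneg hA.le (mul_nonneg (by linarith : (0:ℝ) ≤ 2 - u)
              (by linarith : (0:ℝ) ≤ u + 1)),
            mul_nonneg hB (sq_nonneg u)]
        rw [HamEx3]
        have hpt : -(deriv (fun s => ψ s x) t) ≤ -(deriv (fun y => ψ t y) x * x) := by
          rw [hpx]; linarith
        linarith
      · -- x = 0
        subst hx
        rw [HamEx3_zero]
        have hft : HasDerivAt (fun s => -ψ s 0) (-(deriv (fun s => ψ s 0) t)) t :=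
          (hψt 0 t).hasDerivAt.neg
        have := right_deriv_nonpos ht.2 hft (fun s hs => by
          have h1 := hmax s ⟨ht.1.trans hs.1.le, hs.2.le⟩ 0
          rw [hVneg s 0 le_rfl, hVneg t 0 le_rfl] at h1
          simpa using h1)
        linarith
      · -- x > 0
        have hft : HasDerivAt (fun s => VEx3 T s x - ψ s x)
            (Real.exp (T - t) * x - deriv (fun s => ψ s x) t) t :=
          (hDpos x t hx).sub (hψt x t).hasDerivAt
        have ht1 : Real.exp (T - t) * x - deriv (fun s => ψ s x) t ≤ 0 :=
          right_deriv_nonpos ht.2 hft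
            (fun s hs => hmax s ⟨ht.1.trans hs.1.le, hs.2.le⟩ x)
        have hlm : IsLocalMax (fun y => -Real.exp (T - t) * y - ψ t y) x := by
          filter_upwards [Ioi_mem_nhds hx] with y hy
          have h1 := hmax t htmem y
          rw [hVpos t y hy, hVpos t x hx] at h1
          simpa using h1
        obtain ⟨hpx, hpxx⟩ := key_max (hψx t) (hψxx t) hlm
        have hA : deriv (fun y => ψ t y) x * x < 0 := by
          rw [hpx]
          have := Real.exp_pos (T - t)
          nlinarith
        have hB : 0 ≤ deriv (deriv (fun y => ψ t y)) x * x ^ 2 :=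
          mul_nonneg hpxx (sq_nonneg x)
        have hsup : sSup ((fun u : ℝ =>
            -(1 / 2) * (deriv (deriv (fun y => ψ t y)) x) * x ^ 2 * u ^ 2
            + (deriv (fun y => ψ t y) x) * x * u ^ 2
            - (deriv (fun y => ψ t y) x) * x * u
            - (deriv (fun y => ψ t y) x) * x) '' UEx3)
            ≤ -(deriv (fun y => ψ t y) x * x) := by
          apply csSup_le (UEx3_nonempty.image _)
          rintro z ⟨u, hu, rfl⟩
          rcases hu with ⟨hu1, hu2⟩ | ⟨hu1, hu2⟩
          · nlinarith [mul_nonneg (neg_nonneg.mpr hA.le) (sq_nonneg u),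
              mul_nonneg (neg_nonneg.mpr hA.le) (by linarith : (0:ℝ) ≤ -u),
              mul_nonneg hB (sq_nonneg u)]
          · nlinarith [mul_nonneg (neg_nonneg.mpr hA.le)
                (mul_nonneg (by linarith : (0:ℝ) ≤ u) (by linarith : (0:ℝ) ≤ u - 1)),
              mul_nonneg hB (sq_nonneg u)]
        rw [HamEx3]
        have hpt : -(deriv (fun s => ψ s x) t) ≤ deriv (fun y => ψ t y) x * x := by
          rw [hpx]; linarith
        linarith
    · -- supersolution
      intro t x ht hmin
      have htmem : t ∈ Set.Icc (0:ℝ) T := ⟨ht.1, ht.2.le⟩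
      rcases lt_trichotomy x 0 with hx | hx | hx
      · -- x < 0
        have hft : HasDerivAt (fun s => VEx3 T s x - ψ s x)
            (-Real.exp (t - T) * x - deriv (fun s => ψ s x) t) t :=
          (hDneg x t hx.le).sub (hψt x t).hasDerivAt
        have ht1 : 0 ≤ -Real.exp (t - T) * x - deriv (fun s => ψ s x) t :=
          right_deriv_nonneg ht.2 hft
            (fun s hs => hmin s ⟨ht.1.trans hs.1.le, hs.2.le⟩ x)
        have hlm : IsLocalMin (fun y => -Real.exp (t - T) * y - ψ t y) x := by
          filter_upwards [Iio_mem_nhds hx] with y hy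
          have h1 := hmin t htmem y
          rw [hVneg t y (le_of_lt hy), hVneg t x hx.le] at h1
          simpa using h1
        obtain ⟨hpx, hpxx⟩ := key_min (hψx t) (hψxx t) hlm
        have hB : deriv (deriv (fun y => ψ t y)) x * x ^ 2 ≤ 0 :=
          mul_nonpos_of_nonpos_of_nonneg hpxx (sq_nonneg x)
        have hbdd : BddAbove ((fun u : ℝ =>
            -(1 / 2) * (deriv (deriv (fun y => ψ t y)) x) * x ^ 2 * u ^ 2
            + (deriv (fun y => ψ t y) x) * x * u ^ 2
            - (deriv (fun y => ψ t y) x) * x * u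
            - (deriv (fun y => ψ t y) x) * x) '' UEx3) :=
          (UEx3_compact.image (by fun_prop)).bddAbove
        have hw : (fun u : ℝ =>
            -(1 / 2) * (deriv (deriv (fun y => ψ t y)) x) * x ^ 2 * u ^ 2
            + (deriv (fun y => ψ t y) x) * x * u ^ 2
            - (deriv (fun y => ψ t y) x) * x * u
            - (deriv (fun y => ψ t y) x) * x) (-1)
            ≤ sSup ((fun u : ℝ =>
            -(1 / 2) * (deriv (deriv (fun y => ψ t y)) x) * x ^ 2 * u ^ 2
            + (deriv (fun y => ψ t y) x) * x * u ^ 2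
            - (deriv (fun y => ψ t y) x) * x * u
            - (deriv (fun y => ψ t y) x) * x) '' UEx3) :=
          le_csSup hbdd (Set.mem_image_of_mem _ (Or.inl ⟨le_refl _, by norm_num⟩))
        rw [HamEx3]
        simp only at hw
        have hpt : -(deriv (fun y => ψ t y) x * x) ≤ -(deriv (fun s => ψ s x) t) := by
          rw [hpx]; linarith
        nlinarith [hw, hpt, hB]
      · -- x = 0
        subst hx
        rw [HamEx3_zero]
        have hft : HasDerivAt (fun s => -ψ s 0) (-(deriv (fun s => ψ s 0) t)) t :=
          (hψt 0 t).hasDerivAt.neg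
        have := right_deriv_nonneg ht.2 hft (fun s hs => by
          have h1 := hmin s ⟨ht.1.trans hs.1.le, hs.2.le⟩ 0
          rw [hVneg s 0 le_rfl, hVneg t 0 le_rfl] at h1
          simpa using h1)
        linarith
      · -- x > 0
        have hft : HasDerivAt (fun s => VEx3 T s x - ψ s x)
            (Real.exp (T - t) * x - deriv (fun s => ψ s x) t) t :=
          (hDpos x t hx).sub (hψt x t).hasDerivAt
        have ht1 : 0 ≤ Real.exp (T - t) * x - deriv (fun s => ψ s x) t :=
          right_deriv_nonneg ht.2 hft
            (fun s hs => hmin s ⟨ht.1.trans hs.1.le, hs.2.le⟩ x)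
        have hlm : IsLocalMin (fun y => -Real.exp (T - t) * y - ψ t y) x := by
          filter_upwards [Ioi_mem_nhds hx] with y hy
          have h1 := hmin t htmem y
          rw [hVpos t y hy, hVpos t x hx] at h1
          simpa using h1
        obtain ⟨hpx, hpxx⟩ := key_min (hψx t) (hψxx t) hlm
        have hB : deriv (deriv (fun y => ψ t y)) x * x ^ 2 ≤ 0 :=
          mul_nonpos_of_nonpos_of_nonneg hpxx (sq_nonneg x)
        have hbdd : BddAbove ((fun u : ℝ =>
            -(1 / 2) * (deriv (deriv (fun y => ψ t y)) x) * x ^ 2 * u ^ 2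
            + (deriv (fun y => ψ t y) x) * x * u ^ 2
            - (deriv (fun y => ψ t y) x) * x * u
            - (deriv (fun y => ψ t y) x) * x) '' UEx3) :=
          (UEx3_compact.image (by fun_prop)).bddAbove
        have hw : (fun u : ℝ =>
            -(1 / 2) * (deriv (deriv (fun y => ψ t y)) x) * x ^ 2 * u ^ 2
            + (deriv (fun y => ψ t y) x) * x * u ^ 2
            - (deriv (fun y => ψ t y) x) * x * u
            - (deriv (fun y => ψ t y) x) * x) 1
            ≤ sSup ((fun u : ℝ =>
            -(1 / 2) * (deriv (deriv (fun y => ψ t y)) x) * x ^ 2 * u ^ 2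
            + (deriv (fun y => ψ t y) x) * x * u ^ 2
            - (deriv (fun y => ψ t y) x) * x * u
            - (deriv (fun y => ψ t y) x) * x) '' UEx3) :=
          le_csSup hbdd (Set.mem_image_of_mem _ (Or.inr ⟨le_refl _, by norm_num⟩))
        rw [HamEx3]
        simp only at hw
        have hpt : deriv (fun y => ψ t y) x * x ≤ -(deriv (fun s => ψ s x) t) := by
          rw [hpx]; linarith
        nlinarith [hw, hpt, hB]
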